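/- If a configuration C on the d-dimensional hypercube Q^d (d ≥ 1) is closed and has at least two distinct large vertices, then the support of C has size at least 2d. -/

import Mathlib

open Finset
/-- The `d`-dimensional hypercube: vertices are binary `d`-tuples, adjacent
exactly when they differ in one coordinate. -/
def cube (d : ℕ) : SimpleGraph (Fin d → Bool) where
  Adj x y := hammingDist x y = 1
  symm := ⟨fun (x y : Fin d → Bool) (h : hammingDist x y = 1) => by show hammingDist y x = 1; rwa [hammingDist_comm]⟩
  loopless := ⟨fun (x : Fin d → Bool) (h : hammingDist x x = 1) => by simp [hammingDist_self] at h⟩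

lemma hd_one_iff {d : ℕ} (u x : Fin d → Bool) :
    hammingDist u x = 1 ↔ ∃ i, x = Function.update u i (!(u i)) := by
  constructor
  · intro h
    rw [hammingDist, Finset.card_eq_one] at h
    obtain ⟨i, hi⟩ := h
    refine ⟨i, funext fun k => ?_⟩
    by_cases hk : k = i
    · subst hk
      have : u k ≠ x k := by
        have : k ∈ ({k} : Finset (Fin d)) := Finset.mem_singleton_self k
        rw [← hi, Finset.mem_filter] at this
        exact this.2
      rw [Function.update_self]
      revert this; cases u k <;> cases x k <;> simp
    · have : k ∉ ({i} : Finset (Fin d)) := by simp [hk]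
      rw [← hi, Finset.mem_filter] at this
      push_neg at this
      rw [Function.update_of_ne hk]
      exact (this (Finset.mem_univ k)).symm
  · rintro ⟨i, rfl⟩
    rw [hammingDist]
    convert Finset.card_singleton i
    ext k
    simp only [Finset.mem_filter, Finset.mem_univ, true_and, Finset.mem_singleton]
    by_cases hk : k = i
    · subst hk; cases u k <;> simp
    · simp [Function.update_of_ne hk, hk]

def nbr {d : ℕ} (u : Fin d → Bool) : Finset (Fin d → Bool) :=
  Finset.univ.filter fun x => hammingDist u x = 1

lemma mem_nbr {d : ℕ} {u x : Fin d → Bool} : x ∈ nbr u ↔ hammingDist u x = 1 := by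
  simp [nbr]

lemma upd_inj {d : ℕ} (u : Fin d → Bool) :
    Function.Injective fun i => Function.update u i (!(u i)) := by
  intro i j h
  by_contra hij
  have h2 := congrFun h i
  simp only [Function.update_self, Function.update_of_ne hij] at h2
  cases u i <;> simp_all

lemma card_nbr {d : ℕ} (u : Fin d → Bool) : (nbr u).card = d := by
  have : nbr u = Finset.univ.image fun i : Fin d => Function.update u i (!(u i)) := by
    ext x
    rw [mem_nbr, hd_one_iff]
    simp [eq_comm]
  rw [this, Finset.card_image_of_injective _ (upd_inj u), Finset.card_univ, Fintype.card_fin]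

lemma self_not_mem_nbr {d : ℕ} (u : Fin d → Bool) : u ∉ nbr u := by
  simp [mem_nbr, hammingDist_self]

lemma common_struct {d : ℕ} {u v x : Fin d → Bool} (huv : u ≠ v)
    (hx : hammingDist u x = 1) (hy : hammingDist v x = 1) :
    ∃ i j, i ≠ j ∧ x = Function.update u i (!(u i)) ∧ u i ≠ v i ∧ u j ≠ v j ∧
      ∀ k, k ≠ i → k ≠ j → u k = v k := by
  obtain ⟨i, hi⟩ := (hd_one_iff u x).1 hx
  obtain ⟨j, hj⟩ := (hd_one_iff v x).1 hy
  have hij : i ≠ j := by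
    rintro rfl
    apply huv; funext k
    have h1 := congrFun hi k
    have h2 := congrFun hj k
    by_cases hk : k = i
    · subst hk
      simp only [Function.update_self] at h1 h2
      rw [h1] at h2
      exact Bool.not_inj h2
    · simp only [Function.update_of_ne hk] at h1 h2
      rw [h1] at h2; exact h2
  have hxi : x i = !(u i) := by rw [hi]; simp
  have hxj : x j = !(v j) := by rw [hj]; simp
  have hxi' : x i = v i := by rw [hj, Function.update_of_ne hij]
  have hxj' : x j = u j := by rw [hi, Function.update_of_ne (Ne.symm hij)]
  refine ⟨i, j, hij, hi, ?_, ?_, fun k hki hkj => ?_⟩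
  · rw [← hxi', hxi]; cases u i <;> simp
  · rw [← hxj', hxj]; cases v j <;> simp
  · have h1 := congrFun hi k
    have h2 := congrFun hj k
    simp only [Function.update_of_ne hki] at h1
    simp only [Function.update_of_ne hkj] at h2
    rw [h1] at h2; exact h2

lemma card_inter_le {d : ℕ} {u v : Fin d → Bool} (huv : u ≠ v) :
    ((insert u (nbr u)) ∩ (insert v (nbr v))).card ≤ 2 := by
  by_cases h1 : hammingDist u v = 1
  · -- adjacent case: intersection ⊆ {u, v}
    have hsub : (insert u (nbr u)) ∩ (insert v (nbr v)) ⊆ {u, v} := by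
      intro x hx
      rw [Finset.mem_inter, Finset.mem_insert, Finset.mem_insert] at hx
      rw [Finset.mem_insert, Finset.mem_singleton]
      rcases hx with ⟨hxa, hxb⟩
      rcases hxa with rfl | hxa
      · exact Or.inl rfl
      rcases hxb with rfl | hxb
      · exact Or.inr rfl
      exfalso
      obtain ⟨i, j, hij, _, hui, huj, hagree⟩ :=
        common_struct huv (mem_nbr.1 hxa) (mem_nbr.1 hxb)
      obtain ⟨a, ha⟩ := (hd_one_iff u v).1 h1
      have hia : i = a := by
        by_contra hia
        exact hui (by rw [ha, Function.update_of_ne hia])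
      have hja : j = a := by
        by_contra hja
        exact huj (by rw [ha, Function.update_of_ne hja])
      exact hij (hia.trans hja.symm)
    calc _ ≤ ({u, v} : Finset (Fin d → Bool)).card := Finset.card_le_card hsub
      _ ≤ 2 := Finset.card_insert_le _ _ |>.trans (by simp)
  · -- non-adjacent case
    have hvu : hammingDist v u ≠ 1 := by rwa [hammingDist_comm]
    have hsub : (insert u (nbr u)) ∩ (insert v (nbr v)) ⊆ nbr u ∩ nbr v := by
      intro x hx
      rw [Finset.mem_inter, Finset.mem_insert, Finset.mem_insert] at hx
      rcases hx with ⟨hxa, hxb⟩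
      rcases hxa with rfl | hxa
      · rcases hxb with rfl | hxb
        · exact absurd rfl huv
        · exact absurd (mem_nbr.1 hxb) hvu
      rcases hxb with rfl | hxb
      · exact absurd (mem_nbr.1 hxa) h1
      exact Finset.mem_inter.2 ⟨hxa, hxb⟩
    refine (Finset.card_le_card hsub).trans ?_
    rcases (nbr u ∩ nbr v).eq_empty_or_nonempty with he | ⟨x0, hx0⟩
    · simp [he]
    rw [Finset.mem_inter] at hx0
    obtain ⟨i0, j0, _, _, _, _, hagree⟩ :=
      common_struct huv (mem_nbr.1 hx0.1) (mem_nbr.1 hx0.2)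
    have hsub2 : nbr u ∩ nbr v ⊆
        ({i0, j0} : Finset (Fin d)).image fun i => Function.update u i (!(u i)) := by
      intro x hx
      rw [Finset.mem_inter] at hx
      obtain ⟨i, j, hij, hxu, hui, _, _⟩ :=
        common_struct huv (mem_nbr.1 hx.1) (mem_nbr.1 hx.2)
      refine Finset.mem_image.2 ⟨i, ?_, hxu.symm⟩
      rw [Finset.mem_insert, Finset.mem_singleton]
      by_contra hc
      push_neg at hc
      exact hui (hagree i hc.1 hc.2)
    refine (Finset.card_le_card hsub2).trans ?_
    refine (Finset.card_image_le).trans ?_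
    exact Finset.card_insert_le _ _ |>.trans (by simp)


/-- If a configuration `C` on `Q^d` (`d ≥ 1`) is closed (no vertex with at
least two pebbles has an empty neighbor) and has at least two distinct large
vertices (vertices with at least two pebbles), then its support has size at
least `2d`. -/
theorem closed_two_large_support (d : ℕ) (hd : 1 ≤ d) (C : (Fin d → Bool) → ℕ)
    (hclosed : ∀ u v : Fin d → Bool, (cube d).Adj u v → 2 ≤ C u → 0 < C v)
    (hlarge : ∃ u v : Fin d → Bool, u ≠ v ∧ 2 ≤ C u ∧ 2 ≤ C v) :
    2 * d ≤ (Finset.univ.filter fun x => 0 < C x).card := by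
  obtain ⟨u, v, huv, hu, hv⟩ := hlarge
  set A := insert u (nbr u) with hA
  set B := insert v (nbr v) with hB
  have hAcard : A.card = d + 1 := by
    rw [hA, Finset.card_insert_of_notMem (self_not_mem_nbr u), card_nbr]
  have hBcard : B.card = d + 1 := by
    rw [hB, Finset.card_insert_of_notMem (self_not_mem_nbr v), card_nbr]
  have hsubA : A ⊆ Finset.univ.filter fun x => 0 < C x := by
    intro x hx
    rw [Finset.mem_filter]
    refine ⟨Finset.mem_univ x, ?_⟩
    rw [hA, Finset.mem_insert] at hx
    rcases hx with rfl | hx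
    · omega
    · exact hclosed u x (mem_nbr.1 hx) hu
  have hsubB : B ⊆ Finset.univ.filter fun x => 0 < C x := by
    intro x hx
    rw [Finset.mem_filter]
    refine ⟨Finset.mem_univ x, ?_⟩
    rw [hB, Finset.mem_insert] at hx
    rcases hx with rfl | hx
    · omega
    · exact hclosed v x (mem_nbr.1 hx) hv
  have hunion : A ∪ B ⊆ Finset.univ.filter fun x => 0 < C x :=
    Finset.union_subset hsubA hsubB
  have h1 : (A ∪ B).card + (A ∩ B).card = A.card + B.card :=
    Finset.card_union_add_card_inter A B
  have h2 : (A ∩ B).card ≤ 2 := card_inter_le huv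
  have h3 : (A ∪ B).card ≤ (Finset.univ.filter fun x => 0 < C x).card :=
    Finset.card_le_card hunion
  omega
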